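/- For a sequence r with pairwise distinct entries, the soft sort (Sort_α(r))_l = b_α(r, l + 1/2), l = 0,…,n−1, converges as α → 0⁺ to the increasingly sorted rearrangement of r. -/
import Mathlib


open MeasureTheory Filter Set Topology

/-- For a sequence `r` with pairwise distinct entries, the soft sort
`(Sort_α r)_l = b α (l + 1/2)`, where `b α w` solves `∑ i, F ((b - r i)/α) = w`,
converges as `α → 0⁺` to the increasingly sorted rearrangement of `r`: if `σ` is the
permutation sorting `r` increasingly, then `b α (l + 1/2) → r (σ l)`. -/
theorem soft_sort_tendsto_sorted {n : ℕ} (f F : ℝ → ℝ)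
    (hf_cont : Continuous f) (hf_pos : ∀ x, 0 < f x) (hf_even : ∀ x, f (-x) = f x)
    (hf_int : Integrable f) (hf_norm : ∫ x, f x = 1)
    (hF : ∀ x, F x = ∫ t in Iic x, f t)
    (r : Fin n → ℝ) (hr : Function.Injective r)
    (b : ℝ → ℝ → ℝ)
    (hb : ∀ α : ℝ, 0 < α → ∀ w : ℝ, 0 < w → w < n →
      ∑ i, F ((b α w - r i) / α) = w)
    (σ : Equiv.Perm (Fin n)) (hσ : StrictMono (r ∘ σ)) :
    ∀ l : Fin n,
      Tendsto (fun α : ℝ => b α ((l : ℕ) + 1 / 2)) (nhdsWithin 0 (Ioi 0))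
        (nhds (r (σ l))) := by
  intro l
  set s := r (σ l) with hs
  set w : ℝ := (l : ℕ) + 1 / 2 with hw
  -- basic properties of F
  have hFle : ∀ x, F x ≤ 1 := by
    intro x
    rw [hF x, ← hf_norm]
    exact setIntegral_le_integral hf_int (ae_of_all _ fun t => (hf_pos t).le)
  have hFnn : ∀ x, 0 ≤ F x := by
    intro x; rw [hF x]
    exact setIntegral_nonneg measurableSet_Iic fun t _ => (hf_pos t).le
  have hFmono : StrictMono F := by
    intro a c hac
    have h1 : F c - F a = ∫ t in a..c, f t := by
      rw [hF, hF]; exact intervalIntegral.integral_Iic_sub_Iic hf_int.integrableOn hf_int.integrableOn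
    have h2 : 0 < ∫ t in a..c, f t :=
      intervalIntegral.intervalIntegral_pos_of_pos (hf_cont.intervalIntegrable a c) hf_pos hac
    linarith
  have hFtop : Tendsto F atTop (𝓝 1) := by
    have h := (MeasureTheory.aecover_Iic (μ := (volume : Measure ℝ))
      (tendsto_id (α := ℝ) (x := atTop))).integral_tendsto_of_countably_generated hf_int
    rw [hf_norm] at h
    exact h.congr fun x => (hF x).symm
  have hFbot : Tendsto F atBot (𝓝 0) := by
    have h := (MeasureTheory.aecover_Ioi (μ := (volume : Measure ℝ))
      (tendsto_id (α := ℝ) (x := atBot))).integral_tendsto_of_countably_generated hf_int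
    rw [hf_norm] at h
    have h2 : Tendsto (fun x : ℝ => 1 - ∫ t in Ioi x, f t) atBot (𝓝 (1 - 1)) :=
      tendsto_const_nhds.sub h
    rw [sub_self] at h2
    refine h2.congr fun x => ?_
    have h3 := intervalIntegral.integral_Iic_add_Ioi (b := x) (μ := (volume : Measure ℝ))
      hf_int.integrableOn hf_int.integrableOn
    rw [hf_norm] at h3
    rw [hF x]; linarith
  -- limits of F (c/α) as α → 0⁺
  have hinv : Tendsto (fun α : ℝ => α⁻¹) (nhdsWithin 0 (Ioi 0)) atTop := tendsto_inv_nhdsGT_zero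
  have key : ∀ c : ℝ, c ≠ 0 →
      Tendsto (fun α => F (c / α)) (nhdsWithin 0 (Ioi 0))
        (𝓝 (if 0 < c then (1 : ℝ) else 0)) := by
    intro c hc
    rcases hc.lt_or_gt with hneg | hpos
    · rw [if_neg (not_lt.2 hneg.le)]
      have h1 : Tendsto (fun α : ℝ => c * α⁻¹) (nhdsWithin 0 (Ioi 0)) atBot :=
        (tendsto_const_mul_atBot_of_neg hneg).2 hinv
      have := hFbot.comp h1
      refine this.congr fun α => ?_
      simp [Function.comp, div_eq_mul_inv]
    · rw [if_pos hpos]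
      have h1 : Tendsto (fun α : ℝ => c * α⁻¹) (nhdsWithin 0 (Ioi 0)) atTop :=
        (tendsto_const_mul_atTop_of_pos hpos).2 hinv
      have := hFtop.comp h1
      refine this.congr fun α => ?_
      simp [Function.comp, div_eq_mul_inv]
  -- limit of the sum at a point x avoiding all r i
  have hsum : ∀ x : ℝ, (∀ i, r i ≠ x) →
      Tendsto (fun α => ∑ i, F ((x - r i) / α)) (nhdsWithin 0 (Ioi 0))
        (𝓝 (∑ i, if r i < x then (1 : ℝ) else 0)) := by
    intro x hx
    refine tendsto_finset_sum _ fun i _ => ?_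
    have hc : x - r i ≠ 0 := sub_ne_zero.2 fun h => hx i h.symm
    have := key (x - r i) hc
    rcases lt_or_gt_of_ne hc with hlt | hgt
    · rw [if_neg (not_lt.2 hlt.le)] at this
      rw [if_neg (by intro h; exact absurd (sub_pos.2 h) (not_lt.2 hlt.le))]
      exact this
    · rw [if_pos hgt] at this
      rw [if_pos (sub_pos.1 hgt)]
      exact this
  -- values of the limit sums
  have hcount_upper : ∀ ε : ℝ, 0 < ε →
      w < ∑ i, if r i < s + ε then (1 : ℝ) else 0 := by
    intro ε hε
    rw [← Equiv.sum_comp σ (fun i => if r i < s + ε then (1 : ℝ) else 0)]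
    have hle : ∑ k : Fin n, (if k ≤ l then (1 : ℝ) else 0) ≤
        ∑ k : Fin n, (if r (σ k) < s + ε then (1 : ℝ) else 0) := by
      refine Finset.sum_le_sum fun k _ => ?_
      by_cases hk : k ≤ l
      · rw [if_pos hk, if_pos]
        have : r (σ k) ≤ s := hσ.monotone hk
        linarith
      · rw [if_neg hk]
        positivity
    have hval : ∑ k : Fin n, (if k ≤ l then (1 : ℝ) else 0) = (l : ℕ) + 1 := by
      rw [Finset.sum_boole]
      have : Finset.filter (fun k => k ≤ l) Finset.univ = Finset.Iic l := by
        ext k; simp [Finset.mem_Iic]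
      rw [this, Fin.card_Iic]
      push_cast; ring
    rw [hw]
    calc ((l : ℕ) : ℝ) + 1 / 2 < (l : ℕ) + 1 := by norm_num
    _ = ∑ k : Fin n, (if k ≤ l then (1 : ℝ) else 0) := hval.symm
    _ ≤ _ := hle
  have hcount_lower : ∀ ε : ℝ, 0 < ε →
      (∑ i, if r i < s - ε then (1 : ℝ) else 0) < w := by
    intro ε hε
    rw [← Equiv.sum_comp σ (fun i => if r i < s - ε then (1 : ℝ) else 0)]
    have hle : ∑ k : Fin n, (if r (σ k) < s - ε then (1 : ℝ) else 0) ≤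
        ∑ k : Fin n, (if k < l then (1 : ℝ) else 0) := by
      refine Finset.sum_le_sum fun k _ => ?_
      by_cases hk : k < l
      · rw [if_pos hk]
        split <;> norm_num
      · rw [if_neg hk, if_neg]
        intro hlt
        have : s ≤ r (σ k) := hσ.monotone (not_lt.1 hk)
        linarith
    have hval : ∑ k : Fin n, (if k < l then (1 : ℝ) else 0) = (l : ℕ) := by
      rw [Finset.sum_boole]
      have : Finset.filter (fun k => k < l) Finset.univ = Finset.Iio l := by
        ext k; simp [Finset.mem_Iio]
      rw [this, Fin.card_Iio]
    refine lt_of_le_of_lt hle ?_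
    rw [hval, hw]
    norm_num
  have hw0 : (0 : ℝ) < w := by rw [hw]; positivity
  have hwn : w < n := by
    have h1 : (l : ℕ) + 1 ≤ n := l.2
    have : ((l : ℕ) : ℝ) + 1 ≤ n := by exact_mod_cast h1
    rw [hw]; linarith
  -- final ε-argument
  rw [Metric.tendsto_nhds]
  intro ε hε
  -- choose ε' < ε with s ± ε' avoiding all r i
  obtain ⟨ε', hε'mem, hε'T⟩ := (Set.Ioo_infinite hε).exists_notMem_finset
    ((Finset.univ.image fun i => r i - s) ∪ (Finset.univ.image fun i => s - r i))
  obtain ⟨hε'0, hε'ε⟩ := hε'mem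
  have hne1 : ∀ i, r i ≠ s + ε' := by
    intro i h
    exact hε'T (Finset.mem_union_left _ (Finset.mem_image.2 ⟨i, Finset.mem_univ i, by linarith⟩))
  have hne2 : ∀ i, r i ≠ s - ε' := by
    intro i h
    exact hε'T (Finset.mem_union_right _ (Finset.mem_image.2 ⟨i, Finset.mem_univ i, by linarith⟩))
  have e1 : ∀ᶠ α in nhdsWithin 0 (Ioi 0), w < ∑ i, F ((s + ε' - r i) / α) :=
    (hsum (s + ε') hne1).eventually_const_lt (hcount_upper ε' hε'0)
  have e2 : ∀ᶠ α in nhdsWithin 0 (Ioi 0), (∑ i, F ((s - ε' - r i) / α)) < w :=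
    (hsum (s - ε') hne2).eventually_lt_const (hcount_lower ε' hε'0)
  filter_upwards [e1, e2, self_mem_nhdsWithin] with α h1' h2' hα
  have hα0 : (0 : ℝ) < α := hα
  have hGmono : StrictMono fun x => ∑ i, F ((x - r i) / α) := by
    intro x y hxy
    refine Finset.sum_lt_sum_of_nonempty ⟨l, Finset.mem_univ l⟩ fun i _ => ?_
    exact hFmono (by apply div_lt_div_of_pos_right _ hα0; linarith)
  have hkey : ∑ i, F ((b α w - r i) / α) = w := hb α hα0 w hw0 hwn
  have hub : b α w < s + ε' := by
    refine hGmono.lt_iff_lt.1 ?_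
    rw [hkey]; exact h1'
  have hlb : s - ε' < b α w := by
    refine hGmono.lt_iff_lt.1 ?_
    rw [hkey]; exact h2'
  rw [Real.dist_eq, abs_lt]
  constructor <;> [linarith; linarith]
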